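/- For every positive integer n and every x ∈ G_m, the n-fold convolution power of w satisfies w^{*n}(x) = Σ_{i=0}^{m−1} (φ(i)^n − φ(i+1)^n)·p^{i−m}·1[‖x‖ ≤ p^{−i}] + φ(m)^n·1[x = 0]. -/

import Mathlib

open scoped BigOperators Classical

/-- β = (p^{b+1} − 1)/(p^b (p − 1)) -/
noncomputable def betaC (p : ℕ) (b : ℝ) : ℝ :=
  ((p : ℝ) ^ (b + 1) - 1) / ((p : ℝ) ^ b * ((p : ℝ) - 1))

/-- c_m = (p^b − 1)·p^{mb}/(p^{mb} − 1) -/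
noncomputable def cC (p : ℕ) (b : ℝ) (m : ℕ) : ℝ :=
  ((p : ℝ) ^ b - 1) * (p : ℝ) ^ ((m : ℝ) * b) / ((p : ℝ) ^ ((m : ℝ) * b) - 1)

/-- The norm on `G_m = ZMod (p^m)`: `‖x‖ = p^{−v_p(x̄)}` for `x ≠ 0`, `‖0‖ = 0`. -/
noncomputable def pnorm (p m : ℕ) (x : ZMod (p ^ m)) : ℝ :=
  if x = 0 then 0 else (p : ℝ) ^ (-(padicValNat p x.val : ℤ))

/-- The single-step law `w` on `G_m = ZMod (p^m)`. -/
noncomputable def wfun (p : ℕ) (b : ℝ) (m : ℕ) (x : ZMod (p ^ m)) : ℝ :=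
  if x = 0 then 0 else
    cC p b m * (p : ℝ) ^ (-((m - padicValNat p x.val : ℕ) : ℝ) * b) /
      (((p : ℝ) - 1) * (p : ℝ) ^ ((m - padicValNat p x.val : ℕ) - 1))

/-- φ(k), with φ(0) = 1. -/
noncomputable def phiC (p : ℕ) (b : ℝ) (m : ℕ) (k : ℕ) : ℝ :=
  if k = 0 then 1 else
    ((p : ℝ) ^ ((m : ℝ) * b) / ((p : ℝ) ^ ((m : ℝ) * b) - 1)) *
      (1 - betaC p b * (p : ℝ) ^ (((k : ℝ) - (m : ℝ)) * b))

/-- n-fold convolution power on `G_m`, with `w^{*0}` the point mass at `0`. -/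
noncomputable def convPow (p : ℕ) [Fact p.Prime] (m : ℕ) (w : ZMod (p ^ m) → ℝ) :
    ℕ → ZMod (p ^ m) → ℝ
  | 0, x => if x = 0 then 1 else 0
  | n + 1, x => ∑ y : ZMod (p ^ m), convPow p m w n y * w (x - y)

section Aux


variable (p : ℕ) [Fact p.Prime] (b : ℝ) (m : ℕ)

/-- normalized uniform measure on the subgroup of norm ≤ p^{-i}. -/
noncomputable def efun (i : ℕ) (x : ZMod (p ^ m)) : ℝ :=
  (p : ℝ) ^ ((i : ℝ) - (m : ℝ)) * (if pnorm p m x ≤ (p : ℝ) ^ (-(i : ℝ)) then 1 else 0)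

noncomputable def Ffun (k : ℕ) (x : ZMod (p ^ m)) : ℝ :=
  efun p m k x - if k = 0 then 0 else efun p m (k - 1) x

lemma Npos : 0 < p ^ m := pow_pos (Fact.out (p := p.Prime)).pos m

instance : NeZero (p ^ m) := ⟨(Npos p m).ne'⟩

lemma hp1 : (1 : ℝ) < (p : ℝ) := by
  exact_mod_cast (Fact.out (p := p.Prime)).one_lt

lemma hp0 : (0 : ℝ) < (p : ℝ) := lt_trans one_pos (hp1 p)

lemma val_padic_lt {x : ZMod (p ^ m)} (hx : x ≠ 0) :
    padicValNat p x.val < m := by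
  have hv : x.val ≠ 0 := by
    simpa [ZMod.val_eq_zero] using hx
  have h1 : p ^ padicValNat p x.val ∣ x.val := pow_padicValNat_dvd
  have h2 : p ^ padicValNat p x.val ≤ x.val := Nat.le_of_dvd (Nat.pos_of_ne_zero hv) h1
  have h3 : x.val < p ^ m := ZMod.val_lt x
  have := lt_of_le_of_lt h2 h3
  exact (pow_lt_pow_iff_right₀ (Fact.out (p := p.Prime)).one_lt).mp this

lemma cond_iff {i : ℕ} (x : ZMod (p ^ m)) :
    (pnorm p m x ≤ (p : ℝ) ^ (-(i : ℝ))) ↔ p ^ i ∣ x.val := by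
  by_cases hx : x = 0
  · subst hx
    simp [pnorm, ZMod.val_zero, Real.rpow_natCast]
  · have hv : x.val ≠ 0 := by simpa [ZMod.val_eq_zero] using hx
    rw [pnorm, if_neg hx, padicValNat_dvd_iff_le hv]
    rw [show ((p:ℝ) ^ (-(padicValNat p x.val : ℤ)) = (p:ℝ) ^ ((-(padicValNat p x.val : ℤ) : ℤ) : ℝ)) from (Real.rpow_intCast _ _).symm]
    rw [Real.rpow_le_rpow_left_iff (hp1 p)]
    rw [show ((-(padicValNat p x.val : ℤ) : ℤ) : ℝ) = -(padicValNat p x.val : ℝ) by simp only [Int.cast_neg, Int.cast_natCast]]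
    rw [neg_le_neg_iff, Nat.cast_le]

lemma efun_m (x : ZMod (p ^ m)) :
    efun p m m x = if x = 0 then 1 else 0 := by
  have hiff : (p ^ m ∣ x.val) ↔ x = 0 := by
    constructor
    · intro h
      by_contra hx
      have hv : x.val ≠ 0 := by simpa [ZMod.val_eq_zero] using hx
      exact absurd (Nat.le_of_dvd (Nat.pos_of_ne_zero hv) h) (not_le.mpr (ZMod.val_lt x))
    · rintro rfl; simp [ZMod.val_zero]
  simp only [efun, cond_iff p m x, hiff, sub_self, Real.rpow_zero, one_mul]

lemma cardS {j : ℕ} (hj : j ≤ m) :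
    (Finset.univ.filter fun y : ZMod (p ^ m) => p ^ j ∣ y.val).card = p ^ (m - j) := by
  have hpj : 0 < p ^ j := pow_pos (Fact.out (p := p.Prime)).pos j
  rw [show p ^ (m - j) = (Finset.range (p ^ (m - j))).card from (Finset.card_range _).symm]
  apply Finset.card_nbij' (fun y => y.val / p ^ j) (fun k => ((p ^ j * k : ℕ) : ZMod (p ^ m)))
  · intro y hy
    simp only [Finset.mem_coe, Finset.mem_filter, Finset.mem_univ, true_and] at hy
    simp only [Finset.mem_coe, Finset.mem_range]
    have h3 : y.val < p ^ m := ZMod.val_lt y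
    have : y.val / p ^ j < p ^ m / p ^ j := Nat.div_lt_div_of_lt_of_dvd (pow_dvd_pow p hj) h3
    rwa [Nat.pow_div hj (Fact.out (p := p.Prime)).pos] at this
  · intro k hk
    simp only [Finset.mem_coe, Finset.mem_range] at hk
    simp only [Finset.mem_coe, Finset.mem_filter, Finset.mem_univ, true_and]
    have hlt : p ^ j * k < p ^ m := by
      calc p ^ j * k < p ^ j * p ^ (m - j) := by
            exact (Nat.mul_lt_mul_left hpj).mpr hk
        _ = p ^ m := by rw [← pow_add]; congr 1; omega
    rw [ZMod.val_cast_of_lt hlt]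
    exact Dvd.intro k rfl
  · intro y hy
    simp only [Finset.mem_coe, Finset.mem_filter, Finset.mem_univ, true_and] at hy
    dsimp only
    rw [Nat.mul_div_cancel' hy, ZMod.natCast_zmod_val]
  · intro k hk
    simp only [Finset.mem_coe, Finset.mem_range] at hk
    have hlt : p ^ j * k < p ^ m := by
      calc p ^ j * k < p ^ j * p ^ (m - j) := (Nat.mul_lt_mul_left hpj).mpr hk
        _ = p ^ m := by rw [← pow_add]; congr 1; omega
    dsimp only
    rw [ZMod.val_cast_of_lt hlt, Nat.mul_div_cancel_left _ hpj]

lemma dvd_val_add {i : ℕ} (him : i ≤ m) {a c : ZMod (p ^ m)}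
    (ha : p ^ i ∣ a.val) (hc : p ^ i ∣ c.val) : p ^ i ∣ (a + c).val := by
  rw [ZMod.val_add]
  exact (Nat.dvd_mod_iff (pow_dvd_pow p him)).mpr (dvd_add ha hc)

lemma dvd_val_right {i : ℕ} (him : i ≤ m) {a c : ZMod (p ^ m)}
    (hac : p ^ i ∣ (a + c).val) (ha : p ^ i ∣ a.val) : p ^ i ∣ c.val := by
  rw [ZMod.val_add, Nat.dvd_mod_iff (pow_dvd_pow p him)] at hac
  exact (Nat.dvd_add_right ha).mp hac

lemma countE {i j : ℕ} (hj : j ≤ m) (hij : i ≤ j)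
    (x : ZMod (p ^ m)) :
    ∑ y : ZMod (p ^ m), (if p ^ i ∣ y.val then (1 : ℝ) else 0) *
      (if p ^ j ∣ (x - y).val then (1 : ℝ) else 0) =
    if p ^ i ∣ x.val then ((p : ℝ) ^ (m - j : ℕ)) else 0 := by
  have him : i ≤ m := le_trans hij hj
  simp only [ite_mul, zero_mul, one_mul, ← ite_and]
  rw [Finset.sum_boole]
  by_cases hx : p ^ i ∣ x.val
  · rw [if_pos hx]
    have hset : (Finset.univ.filter fun y : ZMod (p ^ m) =>
        p ^ i ∣ y.val ∧ p ^ j ∣ (x - y).val) =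
        Finset.univ.filter fun y : ZMod (p ^ m) => p ^ j ∣ (x - y).val := by
      apply Finset.filter_congr
      intro y _
      simp only [and_iff_right_iff_imp]
      intro hB
      have hBi : p ^ i ∣ (x - y).val := dvd_trans (pow_dvd_pow p hij) hB
      have : p ^ i ∣ ((x - y) + y).val → p ^ i ∣ y.val := fun h => dvd_val_right p m him h hBi
      apply this
      rwa [sub_add_cancel]
    rw [hset]
    have hcard : (Finset.univ.filter fun y : ZMod (p ^ m) => p ^ j ∣ (x - y).val).card
        = (Finset.univ.filter fun y : ZMod (p ^ m) => p ^ j ∣ y.val).card := by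
      apply Finset.card_nbij' (fun y => x - y) (fun y => x - y)
      · intro y hy
        simp only [Finset.mem_coe, Finset.mem_filter, Finset.mem_univ, true_and] at hy ⊢
        exact hy
      · intro y hy
        simp only [Finset.mem_coe, Finset.mem_filter, Finset.mem_univ, true_and] at hy ⊢
        rwa [sub_sub_cancel]
      · intro y _; exact sub_sub_cancel x y
      · intro y _; exact sub_sub_cancel x y
    rw [hcard, cardS p m hj]
    push_cast
    ring
  · rw [if_neg hx]
    rw [Finset.filter_false_of_mem, Finset.card_empty]
    · simp
    · intro y _
      rintro ⟨hA, hB⟩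
      apply hx
      have hBi : p ^ i ∣ (x - y).val := dvd_trans (pow_dvd_pow p hij) hB
      have := dvd_val_add p m him hA hBi
      rwa [add_sub_cancel] at this

lemma convE_le {i j : ℕ} (hj : j ≤ m) (hij : i ≤ j) (x : ZMod (p ^ m)) :
    ∑ y : ZMod (p ^ m), efun p m i y * efun p m j (x - y) = efun p m i x := by
  simp only [efun]
  simp only [cond_iff p m]
  have : ∀ y : ZMod (p ^ m),
      ((p:ℝ) ^ ((i:ℝ) - (m:ℝ)) * (if p ^ i ∣ y.val then (1:ℝ) else 0)) *
      ((p:ℝ) ^ ((j:ℝ) - (m:ℝ)) * (if p ^ j ∣ (x - y).val then (1:ℝ) else 0)) =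
      ((p:ℝ) ^ ((i:ℝ) - (m:ℝ)) * (p:ℝ) ^ ((j:ℝ) - (m:ℝ))) *
        ((if p ^ i ∣ y.val then (1:ℝ) else 0) * (if p ^ j ∣ (x - y).val then (1:ℝ) else 0)) := by
    intro y; ring
  simp only [this]
  rw [← Finset.mul_sum, countE p m hj hij x]
  by_cases hx : p ^ i ∣ x.val
  · rw [if_pos hx, if_pos hx, mul_one]
    rw [show ((p:ℝ) ^ (m - j : ℕ)) = (p:ℝ) ^ (((m - j : ℕ) : ℕ) : ℝ) from (Real.rpow_natCast _ _).symm]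
    rw [← Real.rpow_add (hp0 p), ← Real.rpow_add (hp0 p)]
    congr 1
    rw [Nat.cast_sub hj]
    ring
  · rw [if_neg hx, if_neg hx]
    ring

lemma convE {i j : ℕ} (hi : i ≤ m) (hj : j ≤ m) (x : ZMod (p ^ m)) :
    ∑ y : ZMod (p ^ m), efun p m i y * efun p m j (x - y) = efun p m (min i j) x := by
  rcases le_total i j with hij | hij
  · rw [min_eq_left hij]; exact convE_le p m hj hij x
  · rw [min_eq_right hij]
    rw [show (∑ y : ZMod (p ^ m), efun p m i y * efun p m j (x - y))
        = ∑ y : ZMod (p ^ m), efun p m j y * efun p m i (x - y) from ?_]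
    · exact convE_le p m hi hij x
    · apply Fintype.sum_equiv (Equiv.subLeft x)
      intro y
      simp only [Equiv.subLeft_apply, sub_sub_cancel]
      ring


lemma convF {k j : ℕ} (hk : k ≤ m) (hj : j ≤ m) (x : ZMod (p ^ m)) :
    ∑ y : ZMod (p ^ m), Ffun p m k y * Ffun p m j (x - y) =
      if k = j then Ffun p m k x else 0 := by
  have key : ∀ a c : ℕ, a ≤ m → c ≤ m →
      ∑ y : ZMod (p ^ m), efun p m a y * efun p m c (x - y) = efun p m (min a c) x :=
    fun a c ha hc => convE p m ha hc x
  rcases Nat.eq_zero_or_pos k with hk0 | hk0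
  · subst hk0
    rcases Nat.eq_zero_or_pos j with hj0 | hj0
    · subst hj0
      simp only [Ffun, eq_self_iff_true, if_true, ite_true, sub_zero]
      rw [key 0 0 (by omega) (by omega)]
      simp
    · simp only [Ffun, eq_self_iff_true, if_true, ite_true, if_neg (by omega : ¬ j = 0), sub_zero]
      simp only [mul_sub, Finset.sum_sub_distrib]
      rw [key 0 j (by omega) hj, key 0 (j-1) (by omega) (by omega)]
      rw [min_eq_left (by omega), min_eq_left (by omega), if_neg (by omega)]
      ring
  · rcases Nat.eq_zero_or_pos j with hj0 | hj0
    · subst hj0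
      simp only [Ffun, eq_self_iff_true, if_true, ite_true, if_neg (by omega : ¬ k = 0), sub_zero]
      simp only [sub_mul, Finset.sum_sub_distrib]
      rw [key k 0 hk (Nat.zero_le m), key (k-1) 0 (le_trans (Nat.sub_le k 1) hk) (Nat.zero_le m)]
      simp [min_zero]
    · simp only [Ffun, if_neg (by omega : ¬ k = 0), if_neg (by omega : ¬ j = 0)]
      simp only [sub_mul, mul_sub, Finset.sum_sub_distrib]
      rw [key k j hk hj, key k (j-1) hk (le_trans (Nat.sub_le j 1) hj),
          key (k-1) j (le_trans (Nat.sub_le k 1) hk) hj,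
          key (k-1) (j-1) (le_trans (Nat.sub_le k 1) hk) (le_trans (Nat.sub_le j 1) hj)]
      rcases lt_trichotomy k j with h | h | h
      · rw [show min k j = k by omega, show min k (j-1) = k by omega,
            show min (k-1) j = k - 1 by omega, show min (k-1) (j-1) = k - 1 by omega,
            if_neg (by omega)]
        ring
      · subst h
        rw [show min k k = k by omega, show min k (k-1) = k - 1 by omega,
            show min (k-1) k = k - 1 by omega, show min (k-1) (k-1) = k - 1 by omega,
            if_pos rfl]
        ring
      · rw [show min k j = j by omega, show min k (j-1) = j - 1 by omega,
            show min (k-1) j = j by omega, show min (k-1) (j-1) = j - 1 by omega,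
            if_neg (by omega)]
        ring

lemma abel_sum (c E : ℕ → ℝ) (M : ℕ) :
    ∑ k ∈ Finset.range (M + 1), c k * (E k - if k = 0 then 0 else E (k - 1)) =
      (∑ i ∈ Finset.range M, (c i - c (i + 1)) * E i) + c M * E M := by
  induction M with
  | zero => simp
  | succ M ih =>
      rw [Finset.sum_range_succ, ih, Finset.sum_range_succ]
      simp only [Nat.succ_ne_zero, ite_false, Nat.add_sub_cancel]
      ring

lemma rpow_mb : (p:ℝ) ^ ((m:ℝ) * b) = ((p:ℝ) ^ b) ^ m := by
  rw [mul_comm, Real.rpow_mul (hp0 p).le, Real.rpow_natCast]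

lemma rpow_kmb (k : ℕ) :
    (p:ℝ) ^ (((k:ℝ) - (m:ℝ)) * b) = ((p:ℝ) ^ b) ^ k / ((p:ℝ) ^ b) ^ m := by
  rw [sub_mul, Real.rpow_sub (hp0 p), mul_comm (k:ℝ) b, mul_comm (m:ℝ) b,
    Real.rpow_mul (hp0 p).le, Real.rpow_mul (hp0 p).le, Real.rpow_natCast, Real.rpow_natCast]

lemma rpow_km (k : ℕ) : (p:ℝ) ^ ((k:ℝ) - (m:ℝ)) = (p:ℝ) ^ k / (p:ℝ) ^ m := by
  rw [Real.rpow_sub (hp0 p), Real.rpow_natCast, Real.rpow_natCast]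

lemma rpow_neg_nat (ℓ : ℕ) : (p:ℝ) ^ (-((ℓ:ℕ):ℝ) * b) = 1 / ((p:ℝ) ^ b) ^ ℓ := by
  rw [neg_mul, Real.rpow_neg (hp0 p).le, mul_comm, Real.rpow_mul (hp0 p).le,
    Real.rpow_natCast, one_div]

lemma T1 (hb : 0 < b) : 1 < (p:ℝ) ^ b :=
  (Real.one_lt_rpow_iff_of_pos (hp0 p)).mpr (Or.inl ⟨hp1 p, hb⟩)

lemma beta_eq : betaC p b = ((p:ℝ)^b * (p:ℝ) - 1) / ((p:ℝ)^b * ((p:ℝ) - 1)) := by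
  rw [betaC, Real.rpow_add (hp0 p), Real.rpow_one]

lemma phi_eq {k : ℕ} (hk : k ≠ 0) :
    phiC p b m k = (((p:ℝ)^b)^m / (((p:ℝ)^b)^m - 1)) *
      (1 - betaC p b * (((p:ℝ)^b)^k / ((p:ℝ)^b)^m)) := by
  rw [phiC, if_neg hk, rpow_mb, rpow_kmb]

lemma cC_eq : cC p b m = ((p:ℝ)^b - 1) * ((p:ℝ)^b)^m / (((p:ℝ)^b)^m - 1) := by
  rw [cC, rpow_mb]

lemma Ssum (hb : 0 < b) (hm : 0 < m) : ∀ v, v < m →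
    ∑ i ∈ Finset.range (v + 1),
        (phiC p b m i - phiC p b m (i + 1)) * (p : ℝ) ^ ((i : ℝ) - (m : ℝ)) =
      cC p b m * ((p : ℝ) ^ b) ^ v * (p : ℝ) ^ (v + 1) /
        (((p : ℝ) ^ b) ^ m * (p : ℝ) ^ m * ((p : ℝ) - 1)) := by
  have hq1 := hp1 p
  have hT1 := T1 p b hb
  have hTm : (1:ℝ) < ((p:ℝ)^b)^m := one_lt_pow₀ hT1 hm.ne'
  have h1 : ((p:ℝ)^b)^m - 1 ≠ 0 := ne_of_gt (by linarith)
  have h2 : (p:ℝ)^b ≠ 0 := by positivity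
  have h3 : (p:ℝ) - 1 ≠ 0 := ne_of_gt (by linarith)
  have h4 : (p:ℝ) ≠ 0 := (hp0 p).ne'
  have h6 : ((p:ℝ)^b)^m ≠ 0 := by positivity
  intro v
  induction v with
  | zero =>
    intro _
    rw [Finset.sum_range_one]
    rw [show phiC p b m 0 = 1 from if_pos rfl, phi_eq p b m (by omega : (0:ℕ)+1 ≠ 0),
      beta_eq p b, cC_eq p b m, rpow_km p m 0]
    field_simp
    ring
  | succ v ih =>
    intro hv
    rw [Finset.sum_range_succ, ih (by omega)]
    rw [phi_eq p b m (k := v+1) (by omega), phi_eq p b m (k := v+1+1) (by omega),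
      beta_eq p b, cC_eq p b m, rpow_km p m (v+1)]
    field_simp
    ring

lemma Wphi (hb : 0 < b) (hm : 0 < m) :
    cC p b m * ((p : ℝ) ^ b) ^ (m - 1) * (p : ℝ) ^ m /
        (((p : ℝ) ^ b) ^ m * (p : ℝ) ^ m * ((p : ℝ) - 1)) + phiC p b m m = 0 := by
  have hq1 := hp1 p
  have hT1 := T1 p b hb
  have hTm : (1:ℝ) < ((p:ℝ)^b)^m := one_lt_pow₀ hT1 hm.ne'
  have h1 : ((p:ℝ)^b)^m - 1 ≠ 0 := ne_of_gt (by linarith)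
  have h2 : (p:ℝ)^b ≠ 0 := by positivity
  have h3 : (p:ℝ) - 1 ≠ 0 := ne_of_gt (by linarith)
  have h4 : (p:ℝ) ≠ 0 := (hp0 p).ne'
  rw [phi_eq p b m (by omega), beta_eq p b, cC_eq p b m]
  obtain ⟨m', rfl⟩ : ∃ m', m = m' + 1 := ⟨m - 1, by omega⟩
  simp only [Nat.add_sub_cancel] at *
  field_simp
  ring

lemma base1 (hb : 0 < b) (hm : 0 < m) (x : ZMod (p ^ m)) :
    wfun p b m x =
      (∑ i ∈ Finset.range m, (phiC p b m i - phiC p b m (i + 1)) * efun p m i x) +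
        phiC p b m m * (if x = 0 then 1 else 0) := by
  by_cases hx : x = 0
  · subst hx
    have he : ∀ i : ℕ, efun p m i (0 : ZMod (p^m)) = (p:ℝ)^((i:ℝ)-(m:ℝ)) := by
      intro i
      rw [efun, if_pos, mul_one]
      rw [pnorm, if_pos rfl]
      positivity
    simp only [he, eq_self_iff_true, if_true, ite_true, mul_one]
    rw [wfun, if_pos rfl]
    obtain ⟨m', rfl⟩ : ∃ m', m = m' + 1 := ⟨m - 1, by omega⟩
    rw [Ssum p b (m'+1) hb hm m' (by omega)]
    have hW := Wphi p b (m'+1) hb hm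
    simp only [Nat.add_sub_cancel] at hW
    linarith
  · set v := padicValNat p x.val with hvdef
    have hvm : v < m := val_padic_lt p m hx
    have hval : x.val ≠ 0 := by simpa [ZMod.val_eq_zero] using hx
    have he : ∀ i : ℕ, efun p m i x = (p:ℝ)^((i:ℝ)-(m:ℝ)) * (if i ≤ v then 1 else 0) := by
      intro i
      rw [efun]
      simp only [cond_iff p m x, padicValNat_dvd_iff_le hval]
      rfl
    rw [if_neg hx, mul_zero, add_zero]
    have hsub : ∑ i ∈ Finset.range m, (phiC p b m i - phiC p b m (i+1)) * efun p m i x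
        = ∑ i ∈ Finset.range (v+1),
            (phiC p b m i - phiC p b m (i+1)) * ((p:ℝ)^((i:ℝ)-(m:ℝ))) := by
      rw [← Finset.sum_subset (Finset.range_subset_range.mpr (by omega : v+1 ≤ m))]
      · apply Finset.sum_congr rfl
        intro i hi
        rw [he i, if_pos (by simp only [Finset.mem_range] at hi; omega), mul_one]
      · intro i _ hinot
        simp only [Finset.mem_range, not_lt] at hinot
        rw [he i, if_neg (by omega), mul_zero, mul_zero]
    rw [hsub, Ssum p b m hb hm v hvm]
    rw [wfun, if_neg hx, ← hvdef]
    rw [show -(((m - v : ℕ)):ℝ) * b = -(((m - v : ℕ) : ℕ):ℝ) * b from rfl, rpow_neg_nat p b (m - v)]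
    have hT1 := T1 p b hb
    have hq1 := hp1 p
    have h2 : (p:ℝ)^b ≠ 0 := by positivity
    have h3 : (p:ℝ) - 1 ≠ 0 := ne_of_gt (by linarith)
    have h4 : (p:ℝ) ≠ 0 := (hp0 p).ne'
    have e1 : ((p:ℝ)^b)^m = ((p:ℝ)^b)^(m-v) * ((p:ℝ)^b)^v := by
      rw [← pow_add]; congr 1; omega
    have e2 : (p:ℝ)^m = (p:ℝ)^((m-v)-1) * (p:ℝ)^(v+1) := by
      rw [← pow_add]; congr 1; omega
    rw [e1, e2]
    field_simp

lemma wF (hb : 0 < b) (hm : 0 < m) (x : ZMod (p ^ m)) :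
    wfun p b m x = ∑ k ∈ Finset.range (m + 1), phiC p b m k * Ffun p m k x := by
  rw [base1 p b m hb hm x, ← efun_m p m x]
  simp only [Ffun]
  exact (abel_sum (phiC p b m) (fun k => efun p m k x) m).symm

lemma mainF (hb : 0 < b) (hm : 0 < m) (n : ℕ) (x : ZMod (p ^ m)) :
    convPow p m (wfun p b m) n x =
      ∑ k ∈ Finset.range (m + 1), phiC p b m k ^ n * Ffun p m k x := by
  induction n generalizing x with
  | zero =>
    simp only [convPow, pow_zero, one_mul, Ffun]
    have h := abel_sum (fun _ => (1:ℝ)) (fun k => efun p m k x) m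
    simp only [one_mul] at h
    rw [h]
    simp [efun_m p m x]
  | succ n ih =>
    simp only [convPow]
    have step1 : ∀ y : ZMod (p ^ m), convPow p m (wfun p b m) n y * wfun p b m (x - y)
        = ∑ k ∈ Finset.range (m+1), ∑ j ∈ Finset.range (m+1),
            (phiC p b m k ^ n * phiC p b m j) * (Ffun p m k y * Ffun p m j (x - y)) := by
      intro y
      rw [ih y, wF p b m hb hm (x - y), Finset.sum_mul_sum]
      apply Finset.sum_congr rfl
      intro k _
      apply Finset.sum_congr rfl
      intro j _
      ring
    simp only [step1]
    rw [Finset.sum_comm]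
    apply Finset.sum_congr rfl
    intro k hk
    have hkm : k ≤ m := by simp only [Finset.mem_range] at hk; omega
    rw [Finset.sum_comm]
    rw [Finset.sum_congr rfl (fun j hj => by
      rw [← Finset.mul_sum,
        convF p m hkm (by simp only [Finset.mem_range] at hj; omega : j ≤ m) x])]
    simp only [mul_ite, mul_zero]
    rw [Finset.sum_ite_eq (Finset.range (m+1)) k
      (fun j => phiC p b m k ^ n * phiC p b m j * Ffun p m k x)]
    rw [if_pos hk]
    ring

end Aux

/-- For every `n ≥ 1` and every `x ∈ G_m`,
`w^{*n}(x) = Σ_{i=0}^{m−1} (φ(i)^n − φ(i+1)^n)·p^{i−m}·1[‖x‖ ≤ p^{−i}] + φ(m)^n·1[x = 0]`. -/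
theorem stmt4 (p : ℕ) [Fact p.Prime] (b : ℝ) (hb : 0 < b) (m : ℕ) (hm : 0 < m)
    (n : ℕ) (hn : 1 ≤ n) (x : ZMod (p ^ m)) :
    convPow p m (wfun p b m) n x =
      (∑ i ∈ Finset.range m,
        (phiC p b m i ^ n - phiC p b m (i + 1) ^ n) * (p : ℝ) ^ ((i : ℝ) - (m : ℝ)) *
          (if pnorm p m x ≤ (p : ℝ) ^ (-(i : ℝ)) then 1 else 0)) +
      phiC p b m m ^ n * (if x = 0 then 1 else 0) := by
  rw [mainF p b m hb hm n x]
  simp only [Ffun]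
  rw [abel_sum (fun k => phiC p b m k ^ n) (fun k => efun p m k x) m]
  rw [efun_m p m x]
  simp only [efun, ← mul_assoc]
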